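/- Let A be an n×n real matrix with nonnegative entries and spectral radius ρ(A) < 1, let B ∈ ℝⁿ have nonnegative entries, let (e_k) be a sequence of vectors in ℝⁿ with nonnegative entries, and let (w_k) be a sequence of nonnegative reals with w_k → 0 as k → ∞. If e_{k+1} ≤ A e_k + B w_k componentwise for all k ≥ 0, then e_k → 0 as k → ∞. -/

import Mathlib

open Matrix Filter Set
open scoped ENNReal NNReal BigOperators

noncomputable section

namespace LSTMmpc

/-- The logistic sigmoid `σ(z) = 1/(1+e^{-z})`. -/
def sigmoid (z : ℝ) : ℝ := 1 / (1 + Real.exp (-z))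

/-- Euclidean norm of a finite real vector. -/
def enorm {k : ℕ} (v : Fin k → ℝ) : ℝ := Real.sqrt (∑ i, v i ^ 2)

/-- Sup (∞) norm of a finite real vector. -/
def vinf {k : ℕ} (v : Fin k → ℝ) : ℝ := ⨆ i, |v i|

/-- Spectral (ℓ²-induced) norm of a real matrix. -/
def spec {a b : ℕ} (M : Matrix (Fin a) (Fin b) ℝ) : ℝ :=
  ⨆ v : {v : Fin b → ℝ // enorm v ≤ 1}, enorm (M.mulVec v.1)

/-- Induced ∞-norm (maximum absolute row sum) of the horizontal block `[s•A, B, v]`. -/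
def rowNorm3 {n m : ℕ} (s : ℝ) (A : Matrix (Fin n) (Fin m) ℝ)
    (B : Matrix (Fin n) (Fin n) ℝ) (v : Fin n → ℝ) : ℝ :=
  ⨆ i, (∑ j, |s * A i j| + ∑ j, |B i j| + |v i|)

/-- Induced ∞-norm of the horizontal block `[s•A, B, v, C, t•D]`. -/
def rowNorm5 {n m p : ℕ} (s : ℝ) (A : Matrix (Fin n) (Fin m) ℝ)
    (B : Matrix (Fin n) (Fin n) ℝ) (v : Fin n → ℝ)
    (C : Matrix (Fin n) (Fin n) ℝ) (t : ℝ) (D : Matrix (Fin n) (Fin p) ℝ) : ℝ :=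
  ⨆ i, (∑ j, |s * A i j| + ∑ j, |B i j| + |v i| + ∑ j, |C i j| + ∑ j, |t * D i j|)

/-- Weighted norm `‖v‖_P = √(vᵀ P v)`. -/
def wnorm {k : ℕ} (P : Matrix (Fin k) (Fin k) ℝ) (v : Fin k → ℝ) : ℝ :=
  Real.sqrt (v ⬝ᵥ P.mulVec v)

/-- Minimum eigenvalue of a hermitian real matrix. -/
def lamMin {k : ℕ} (P : Matrix (Fin k) (Fin k) ℝ) (hP : P.IsHermitian) : ℝ :=
  ⨅ i, hP.eigenvalues i

/-- Maximum eigenvalue of a hermitian real matrix. -/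
def lamMax {k : ℕ} (P : Matrix (Fin k) (Fin k) ℝ) (hP : P.IsHermitian) : ℝ :=
  ⨆ i, hP.eigenvalues i

/-- Spectral radius (over `ℂ`) of a real square matrix. -/
def specRad {k : ℕ} (M : Matrix (Fin k) (Fin k) ℝ) : ℝ≥0∞ :=
  spectralRadius ℂ (M.map (fun x : ℝ => (x : ℂ)))

/-- Class `K∞` functions `[0,∞) → [0,∞)`. -/
def IsClassKInf (γ : ℝ → ℝ) : Prop :=
  ContinuousOn γ (Set.Ici 0) ∧ γ 0 = 0 ∧ StrictMonoOn γ (Set.Ici 0) ∧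
    (∀ s, 0 ≤ s → 0 ≤ γ s) ∧ Tendsto γ atTop atTop

/-- Class `KL` functions. -/
def IsClassKL (β : ℝ → ℕ → ℝ) : Prop :=
  (∀ k, ContinuousOn (fun s => β s k) (Set.Ici 0) ∧
      StrictMonoOn (fun s => β s k) (Set.Ici 0) ∧ β 0 k = 0) ∧
  (∀ s, 0 < s → StrictAnti (fun k => β s k) ∧ Tendsto (fun k => β s k) atTop (nhds 0)) ∧
  (∀ s, 0 ≤ s → ∀ k, 0 ≤ β s k)

/-- Weights of an LSTM network. -/
structure LSTM (n m p : ℕ) where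
  Wf : Matrix (Fin n) (Fin m) ℝ
  Wi : Matrix (Fin n) (Fin m) ℝ
  Wc : Matrix (Fin n) (Fin m) ℝ
  Wo : Matrix (Fin n) (Fin m) ℝ
  Uf : Matrix (Fin n) (Fin n) ℝ
  Ui : Matrix (Fin n) (Fin n) ℝ
  Uc : Matrix (Fin n) (Fin n) ℝ
  Uo : Matrix (Fin n) (Fin n) ℝ
  bf : Fin n → ℝ
  bi : Fin n → ℝ
  bc : Fin n → ℝ
  bo : Fin n → ℝ
  Wy : Matrix (Fin p) (Fin n) ℝ
  bY : Fin p → ℝ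

/-- LSTM state `(c, h)`. -/
abbrev State (n : ℕ) := (Fin n → ℝ) × (Fin n → ℝ)

/-- Augmented state `(c, h, d)`. -/
abbrev AugState (n p : ℕ) := (Fin n → ℝ) × (Fin n → ℝ) × (Fin p → ℝ)

variable {n m p : ℕ}

def stepC (S : LSTM n m p) (u : Fin m → ℝ) (c h : Fin n → ℝ) : Fin n → ℝ := fun j =>
  sigmoid ((S.Wf.mulVec u + S.Uf.mulVec h + S.bf) j) * c j +
    sigmoid ((S.Wi.mulVec u + S.Ui.mulVec h + S.bi) j) *
      Real.tanh ((S.Wc.mulVec u + S.Uc.mulVec h + S.bc) j)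

def stepH (S : LSTM n m p) (u : Fin m → ℝ) (c h : Fin n → ℝ) : Fin n → ℝ := fun j =>
  sigmoid ((S.Wo.mulVec u + S.Uo.mulVec h + S.bo) j) * Real.tanh (stepC S u c h j)

/-- One step of the LSTM dynamics `x⁺ = f(x, u)`. -/
def step (S : LSTM n m p) (x : State n) (u : Fin m → ℝ) : State n :=
  (stepC S u x.1 x.2, stepH S u x.1 x.2)

/-- Output map `g(x) = W_y h + b_y`. -/
def out (S : LSTM n m p) (x : State n) : Fin p → ℝ := S.Wy.mulVec x.2 + S.bY

/-- LSTM trajectory. -/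
def traj (S : LSTM n m p) (x0 : State n) (u : ℕ → Fin m → ℝ) : ℕ → State n
  | 0 => x0
  | k + 1 => step S (traj S x0 u k) (u k)

def sFb (S : LSTM n m p) (umax : ℝ) : ℝ := sigmoid (rowNorm3 umax S.Wf S.Uf S.bf)
def sIb (S : LSTM n m p) (umax : ℝ) : ℝ := sigmoid (rowNorm3 umax S.Wi S.Ui S.bi)
def sOb (S : LSTM n m p) (umax : ℝ) : ℝ := sigmoid (rowNorm3 umax S.Wo S.Uo S.bo)
def sCb (S : LSTM n m p) (umax : ℝ) : ℝ := Real.tanh (rowNorm3 umax S.Wc S.Uc S.bc)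
def sXb (S : LSTM n m p) (umax : ℝ) : ℝ :=
  Real.tanh (sIb S umax * sCb S umax / (1 - sFb S umax))
def alphaD (S : LSTM n m p) (umax : ℝ) : ℝ :=
  (1/4) * spec S.Uf * (sIb S umax * sCb S umax / (1 - sFb S umax)) +
    sIb S umax * spec S.Uc + (1/4) * spec S.Ui * sCb S umax
def betaD (S : LSTM n m p) (umax : ℝ) : ℝ :=
  (1/4) * spec S.Wf * (sIb S umax * sCb S umax / (1 - sFb S umax)) +
    sIb S umax * spec S.Wc + (1/4) * spec S.Wi * sCb S umax
def Adelta (S : LSTM n m p) (umax : ℝ) : Matrix (Fin 2) (Fin 2) ℝ :=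
  !![sFb S umax, alphaD S umax;
     sOb S umax * sFb S umax, alphaD S umax * sOb S umax + (1/4) * sXb S umax * spec S.Uo]
def Bdelta (S : LSTM n m p) (umax : ℝ) : Fin 2 → ℝ :=
  ![betaD S umax, betaD S umax * sOb S umax + (1/4) * sXb S umax * spec S.Wo]

def setU (m : ℕ) (umax : ℝ) : Set (Fin m → ℝ) := {u | vinf u ≤ umax}
def setH (n : ℕ) : Set (Fin n → ℝ) := {h | vinf h ≤ 1}
def setC (S : LSTM n m p) (umax : ℝ) : Set (Fin n → ℝ) :=
  {c | vinf c ≤ sIb S umax * sCb S umax / (1 - sFb S umax)}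
def setX (S : LSTM n m p) (umax : ℝ) : Set (State n) := (setC S umax) ×ˢ (setH n)
def setD (p : ℕ) (dmax : ℝ) : Set (Fin p → ℝ) := {d | vinf d ≤ dmax}

/-- Euclidean norm of the full state. -/
def xnorm {n : ℕ} (x : State n) : ℝ := Real.sqrt (∑ i, x.1 i ^ 2 + ∑ i, x.2 i ^ 2)

/-- Euclidean norm of the augmented state. -/
def chinorm {n p : ℕ} (χ : AugState n p) : ℝ :=
  Real.sqrt (∑ i, χ.1 i ^ 2 + ∑ i, χ.2.1 i ^ 2 + ∑ i, χ.2.2 i ^ 2)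

/-- Incremental input-to-state stability of the LSTM in `X` and `U`. -/
def deltaISS (S : LSTM n m p) (umax : ℝ) : Prop :=
  ∃ β γ, IsClassKL β ∧ IsClassKInf γ ∧
    ∀ (k : ℕ) (xa0 xb0 : State n), xa0 ∈ setX S umax → xb0 ∈ setX S umax →
      ∀ ua ub : ℕ → Fin m → ℝ,
        (∀ h < k, ua h ∈ setU m umax) → (∀ h < k, ub h ∈ setU m umax) →
        xnorm (traj S xa0 ua k - traj S xb0 ub k) ≤
          β (xnorm (xa0 - xb0)) k + γ (⨆ h ∈ Finset.range k, enorm (ua h - ub h))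

/-- Observer gains. -/
structure Gains (n p : ℕ) where
  Lf : Matrix (Fin n) (Fin p) ℝ
  Li : Matrix (Fin n) (Fin p) ℝ
  Lo : Matrix (Fin n) (Fin p) ℝ
  Ld : Matrix (Fin p) (Fin p) ℝ

/-- Componentwise saturation to `[-dmax, dmax]`. -/
def sat {p : ℕ} (dmax : ℝ) (v : Fin p → ℝ) : Fin p → ℝ := fun j =>
  min (max (v j) (-dmax)) dmax

/-- Observer output `ŷ = W_y ĥ + b_y + d̂`. -/
def yhat (S : LSTM n m p) (hh : Fin n → ℝ) (dh : Fin p → ℝ) : Fin p → ℝ :=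
  S.Wy.mulVec hh + S.bY + dh

def obsC (S : LSTM n m p) (G : Gains n p) (u : Fin m → ℝ) (y : Fin p → ℝ)
    (ch hh : Fin n → ℝ) (dh : Fin p → ℝ) : Fin n → ℝ := fun j =>
  sigmoid ((S.Wf.mulVec u + S.Uf.mulVec hh + S.bf + G.Lf.mulVec (y - yhat S hh dh)) j) * ch j +
    sigmoid ((S.Wi.mulVec u + S.Ui.mulVec hh + S.bi + G.Li.mulVec (y - yhat S hh dh)) j) *
      Real.tanh ((S.Wc.mulVec u + S.Uc.mulVec hh + S.bc) j)

def obsH (S : LSTM n m p) (G : Gains n p) (u : Fin m → ℝ) (y : Fin p → ℝ)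
    (ch hh : Fin n → ℝ) (dh : Fin p → ℝ) : Fin n → ℝ := fun j =>
  sigmoid ((S.Wo.mulVec u + S.Uo.mulVec hh + S.bo + G.Lo.mulVec (y - yhat S hh dh)) j) *
    Real.tanh (obsC S G u y ch hh dh j)

def obsD (S : LSTM n m p) (G : Gains n p) (dmax : ℝ) (y : Fin p → ℝ)
    (hh : Fin n → ℝ) (dh : Fin p → ℝ) : Fin p → ℝ :=
  sat dmax (dh + G.Ld.mulVec (y - yhat S hh dh))

/-- One step of the observer. -/
def obsStep (S : LSTM n m p) (G : Gains n p) (dmax : ℝ) (u : Fin m → ℝ) (y : Fin p → ℝ)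
    (χ : AugState n p) : AugState n p :=
  (obsC S G u y χ.1 χ.2.1 χ.2.2, obsH S G u y χ.1 χ.2.1 χ.2.2, obsD S G dmax y χ.2.1 χ.2.2)

/-- Observer trajectory. -/
def obsTraj (S : LSTM n m p) (G : Gains n p) (dmax : ℝ) (u : ℕ → Fin m → ℝ)
    (y : ℕ → Fin p → ℝ) (χ0 : AugState n p) : ℕ → AugState n p
  | 0 => χ0
  | k + 1 => obsStep S G dmax (u k) (y k) (obsTraj S G dmax u y χ0 k)

def sFh (S : LSTM n m p) (G : Gains n p) (umax dmax : ℝ) : ℝ :=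
  sigmoid (rowNorm5 umax S.Wf (S.Uf - G.Lf * S.Wy) S.bf (G.Lf * S.Wy) (2 * dmax) G.Lf)
def sIh (S : LSTM n m p) (G : Gains n p) (umax dmax : ℝ) : ℝ :=
  sigmoid (rowNorm5 umax S.Wi (S.Ui - G.Li * S.Wy) S.bi (G.Li * S.Wy) (2 * dmax) G.Li)
def sOh (S : LSTM n m p) (G : Gains n p) (umax dmax : ℝ) : ℝ :=
  sigmoid (rowNorm5 umax S.Wo (S.Uo - G.Lo * S.Wy) S.bo (G.Lo * S.Wy) (2 * dmax) G.Lo)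
def alphaH (S : LSTM n m p) (G : Gains n p) (umax : ℝ) : ℝ :=
  (1/4) * (sIb S umax * sCb S umax / (1 - sFb S umax)) * spec (S.Uf - G.Lf * S.Wy) +
    sIb S umax * spec S.Uc + (1/4) * sCb S umax * spec (S.Ui - G.Li * S.Wy)
def betaH (S : LSTM n m p) (G : Gains n p) (umax : ℝ) : ℝ :=
  (1/4) * (sIb S umax * sCb S umax / (1 - sFb S umax)) * spec G.Lf +
    (1/4) * sCb S umax * spec G.Li
def gammaH (S : LSTM n m p) (G : Gains n p) (umax dmax : ℝ) : ℝ :=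
  sOh S G umax dmax * alphaH S G umax + (1/4) * sXb S umax * spec (S.Uo - G.Lo * S.Wy)
def Ad (S : LSTM n m p) (G : Gains n p) (umax dmax : ℝ) : Matrix (Fin 3) (Fin 3) ℝ :=
  !![sFh S G umax dmax, alphaH S G umax, betaH S G umax;
     sOh S G umax dmax * sFh S G umax dmax, gammaH S G umax dmax,
       sOh S G umax dmax * betaH S G umax + (1/4) * sXb S umax * spec G.Lo;
     0, spec (G.Ld * S.Wy), spec ((1 : Matrix (Fin p) (Fin p) ℝ) - G.Ld)]

def setChat (S : LSTM n m p) (G : Gains n p) (umax dmax : ℝ) : Set (Fin n → ℝ) :=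
  {c | vinf c ≤ sIh S G umax dmax * sCb S umax / (1 - sFh S G umax dmax)}
def setIhat (S : LSTM n m p) (G : Gains n p) (umax dmax : ℝ) : Set (AugState n p) :=
  (setChat S G umax dmax) ×ˢ ((setH n) ×ˢ (setD p dmax))

/-- Incremental Lyapunov function for the LSTM. -/
def Vs {n : ℕ} (Ps : Matrix (Fin 2) (Fin 2) ℝ) (xa xb : State n) : ℝ :=
  wnorm Ps ![enorm (xa.1 - xb.1), enorm (xa.2 - xb.2)]

/-- Lyapunov function for the observer estimation error. -/
def Vo {n p : ℕ} (Po : Matrix (Fin 3) (Fin 3) ℝ) (χh χ : AugState n p) : ℝ :=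
  wnorm Po ![enorm (χh.1 - χ.1), enorm (χh.2.1 - χ.2.1), enorm (χh.2.2 - χ.2.2)]

/-- Disturbance-augmented LSTM update applied to the observer state. -/
def faug (S : LSTM n m p) (χ : AugState n p) (u : Fin m → ℝ) : AugState n p :=
  (stepC S u χ.1 χ.2.1, stepH S u χ.1 χ.2.1, χ.2.2)

def alphaBar (S : LSTM n m p) (G : Gains n p) (umax dmax : ℝ) : ℝ :=
  (1/4) * (sIh S G umax dmax * sCb S umax / (1 - sFh S G umax dmax)) * spec (G.Lf * S.Wy) +
    (1/4) * sCb S umax * spec (G.Li * S.Wy)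
def betaBar (S : LSTM n m p) (G : Gains n p) (umax dmax : ℝ) : ℝ :=
  (1/4) * (sIh S G umax dmax * sCb S umax / (1 - sFh S G umax dmax)) * spec G.Lf +
    (1/4) * sCb S umax * spec G.Li
def gammaBar (S : LSTM n m p) (G : Gains n p) (umax dmax : ℝ) : ℝ :=
  (1/4) * Real.tanh (sIh S G umax dmax * sCb S umax / (1 - sFh S G umax dmax))
def Lmat (S : LSTM n m p) (G : Gains n p) (umax dmax : ℝ) : Matrix (Fin 3) (Fin 3) ℝ :=
  !![0, alphaBar S G umax dmax, betaBar S G umax dmax;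
     0, gammaBar S G umax dmax * spec (G.Lo * S.Wy) + sOb S umax * alphaBar S G umax dmax,
       gammaBar S G umax dmax * spec G.Lo + sOb S umax * betaBar S G umax dmax;
     0, spec (G.Ld * S.Wy), spec G.Ld]


/-- Scalar comparison lemma. -/
lemma aux13_scalar (r : ℝ) (hr0 : 0 ≤ r) (hr1 : r < 1)
    (x w : ℕ → ℝ) (hx0 : ∀ k, 0 ≤ x k) (hw0 : ∀ k, 0 ≤ w k)
    (hrec : ∀ k, x (k + 1) ≤ r * x k + w k)
    (hw : Tendsto w atTop (nhds 0)) :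
    Tendsto x atTop (nhds 0) := by
  rw [Metric.tendsto_atTop] at hw ⊢
  intro ε hε
  have hr1' : 0 < 1 - r := by linarith
  have hε2 : 0 < ε * (1 - r) / 2 := by positivity
  obtain ⟨K, hK⟩ := hw _ hε2
  have claim : ∀ t, x (K + t) ≤ r ^ t * x K + ε / 2 := by
    intro t
    induction t with
    | zero => simp; linarith
    | succ t ih =>
      have h2 : w (K + t) ≤ ε * (1 - r) / 2 := by
        have := hK (K + t) (by omega)
        rw [Real.dist_eq, sub_zero, abs_of_nonneg (hw0 _)] at this
        linarith
      have h3 : x (K + (t + 1)) ≤ r * x (K + t) + w (K + t) := hrec (K + t)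
      have h4 : r * x (K + t) ≤ r * (r ^ t * x K + ε / 2) :=
        mul_le_mul_of_nonneg_left ih hr0
      have h5 : r * (r ^ t * x K + ε / 2) = r ^ (t + 1) * x K + r * (ε / 2) := by ring
      nlinarith [hx0 (K + t)]
  have hpow : Tendsto (fun t => r ^ t * x K) atTop (nhds 0) := by
    simpa using (tendsto_pow_atTop_nhds_zero_of_lt_one hr0 hr1).mul_const (x K)
  rw [Metric.tendsto_atTop] at hpow
  obtain ⟨T, hT⟩ := hpow (ε / 2) (by positivity)
  refine ⟨K + T, fun k hk => ?_⟩
  have h6 : x k ≤ r ^ (k - K) * x K + ε / 2 := by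
    have := claim (k - K); convert this using 3; omega
  have h7 : r ^ (k - K) * x K < ε / 2 := by
    have := hT (k - K) (by omega)
    rw [Real.dist_eq, sub_zero] at this
    exact (le_abs_self _).trans_lt this
  rw [Real.dist_eq, sub_zero, abs_of_nonneg (hx0 _)]
  linarith

attribute [local instance] Matrix.linftyOpNormedRing Matrix.linftyOpNormedAlgebra

lemma aux13_entry_le {N : ℕ} (M : Matrix (Fin N) (Fin N) ℂ) (i j : Fin N) :
    ‖M i j‖ ≤ ‖M‖ := by
  have h1 : ‖M i j‖₊ ≤ ∑ l, ‖M i l‖₊ :=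
    Finset.single_le_sum (f := fun l => ‖M i l‖₊) (fun l _ => zero_le) (Finset.mem_univ j)
  have h2 : (∑ l, ‖M i l‖₊) ≤ ‖M‖₊ := by
    rw [Matrix.linfty_opNNNorm_def]
    exact Finset.le_sup (f := fun i => ∑ l, ‖M i l‖₊) (Finset.mem_univ i)
  exact_mod_cast h1.trans h2

lemma aux13_pow_bound {N : ℕ} [NeZero N] (A : Matrix (Fin N) (Fin N) ℝ)
    (h : specRad A < 1) :
    ∃ C r : ℝ, 1 ≤ C ∧ 0 ≤ r ∧ r < 1 ∧ ∀ k i j, |(A ^ k) i j| ≤ C * r ^ k := by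
  set A' : Matrix (Fin N) (Fin N) ℂ := A.map (fun x : ℝ => (x : ℂ)) with hA'
  obtain ⟨r, hr1, hr2⟩ := ENNReal.lt_iff_exists_nnreal_btwn.mp h
  have hG := spectrum.pow_nnnorm_pow_one_div_tendsto_nhds_spectralRadius A'
  have hev : ∀ᶠ n : ℕ in atTop, (‖A' ^ n‖₊ : ℝ≥0∞) ^ (1 / (n : ℝ)) < (r : ℝ≥0∞) :=
    hG.eventually_lt_const hr1
  obtain ⟨K, hK⟩ := eventually_atTop.mp hev
  -- real r₀
  set r₀ : ℝ := max (r : ℝ) (1/2) with hr₀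
  have hr₀0 : 0 < r₀ := lt_of_lt_of_le (by norm_num) (le_max_right _ _)
  have hr₀1 : r₀ < 1 := by
    have : (r : ℝ) < 1 := by exact_mod_cast ENNReal.coe_lt_one_iff.mp hr2
    exact max_lt this (by norm_num)
  have hbig : ∀ n, K + 1 ≤ n → ‖A' ^ n‖ ≤ r₀ ^ n := by
    intro n hn
    have hn0 : (n : ℝ) ≠ 0 := Nat.cast_ne_zero.mpr (by omega)
    have h1 := (hK n (by omega)).le
    have h2 : ((‖A' ^ n‖₊ : ℝ≥0∞) ^ (1 / (n : ℝ))) ^ (n : ℝ) ≤ ((r : ℝ≥0∞)) ^ (n : ℝ) :=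
      ENNReal.rpow_le_rpow h1 (Nat.cast_nonneg n)
    rw [← ENNReal.rpow_mul, one_div, inv_mul_cancel₀ hn0, ENNReal.rpow_one,
      ENNReal.rpow_natCast, ← ENNReal.coe_pow, ENNReal.coe_le_coe] at h2
    have h3 : ‖A' ^ n‖ ≤ (r : ℝ) ^ n := by
      have := (NNReal.coe_le_coe.mpr h2)
      simpa [coe_nnnorm] using this
    refine h3.trans (pow_le_pow_left₀ r.coe_nonneg (le_max_left _ _) n)
  -- assemble the constant
  set C : ℝ := 1 + ∑ j ∈ Finset.range (K + 1), ‖A' ^ j‖ / r₀ ^ j with hC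
  have hCsum : 0 ≤ ∑ j ∈ Finset.range (K + 1), ‖A' ^ j‖ / r₀ ^ j :=
    Finset.sum_nonneg fun j _ => div_nonneg (norm_nonneg _) (pow_nonneg hr₀0.le j)
  have hC1 : 1 ≤ C := by simp only [hC]; linarith
  refine ⟨C, r₀, hC1, hr₀0.le, hr₀1, fun k i j => ?_⟩
  have hmap : (A ^ k).map (fun x : ℝ => (x : ℂ)) = A' ^ k := by
    have : A' = (Complex.ofRealHom.mapMatrix : Matrix (Fin N) (Fin N) ℝ →+* _) A := rfl
    rw [this, ← map_pow]
    rfl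
  have hentry : |(A ^ k) i j| ≤ ‖A' ^ k‖ := by
    rw [← hmap]
    simpa [Matrix.map_apply, Complex.norm_real] using
      aux13_entry_le ((A ^ k).map (fun x : ℝ => (x : ℂ))) i j
  rcases le_or_gt k K with hk | hk
  · have hterm : ‖A' ^ k‖ / r₀ ^ k ≤ C - 1 := by
      simp only [hC, add_sub_cancel_left]
      exact Finset.single_le_sum
        (f := fun j => ‖A' ^ j‖ / r₀ ^ j)
        (fun j _ => div_nonneg (norm_nonneg _) (pow_nonneg hr₀0.le j))
        (Finset.mem_range.mpr (by omega))
    have hk' : ‖A' ^ k‖ ≤ (C - 1) * r₀ ^ k := by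
      have := mul_le_mul_of_nonneg_right hterm (pow_nonneg hr₀0.le k)
      rwa [div_mul_cancel₀ _ (by positivity : r₀ ^ k ≠ 0)] at this
    nlinarith [pow_nonneg hr₀0.le k, hentry]
  · have := hbig k (by omega)
    have : ‖A' ^ k‖ ≤ C * r₀ ^ k := by nlinarith [pow_nonneg hr₀0.le k]
    linarith [hentry]

/-- a nonnegative vector sequence satisfying `e⁺ ≤ A e + B w`
componentwise with `ρ(A) < 1` and `w → 0` converges to zero. -/
theorem statement13 {N : ℕ} (A : Matrix (Fin N) (Fin N) ℝ) (hA : ∀ i j, 0 ≤ A i j)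
    (hrho : specRad A < 1) (B : Fin N → ℝ) (hB : ∀ i, 0 ≤ B i)
    (e : ℕ → Fin N → ℝ) (he : ∀ k i, 0 ≤ e k i)
    (w : ℕ → ℝ) (hw : ∀ k, 0 ≤ w k) (hw0 : Tendsto w atTop (nhds 0))
    (hrec : ∀ k i, e (k + 1) i ≤ A.mulVec (e k) i + B i * w k) :
    Tendsto e atTop (nhds 0) := by
  rcases Nat.eq_zero_or_pos N with hN | hN
  · subst hN
    have : e = fun _ => 0 := funext fun k => Subsingleton.elim _ _
    rw [this]; exact tendsto_const_nhds
  haveI : NeZero N := ⟨by omega⟩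
  obtain ⟨C, r, hC1, hr0, hr1, hCr⟩ := aux13_pow_bound A hrho
  have hkey : ∀ k i, e k i ≤ ((A ^ k) *ᵥ (e 0)) i +
      ∑ j ∈ Finset.range k, w j * ((A ^ (k - 1 - j)) *ᵥ B) i := by
    intro k
    induction k with
    | zero => intro i; simp [Matrix.one_mulVec]
    | succ k ih =>
      intro i
      have hmono : (A *ᵥ (e k)) i ≤ (A *ᵥ (fun l => ((A ^ k) *ᵥ (e 0)) l +
          ∑ j ∈ Finset.range k, w j * ((A ^ (k - 1 - j)) *ᵥ B) l)) i := by
        simp only [Matrix.mulVec, dotProduct]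
        exact Finset.sum_le_sum fun l _ => mul_le_mul_of_nonneg_left (ih l) (hA i l)
      have h1 : (fun l => ((A ^ k) *ᵥ (e 0)) l +
            ∑ j ∈ Finset.range k, w j * ((A ^ (k - 1 - j)) *ᵥ B) l)
          = ((A ^ k) *ᵥ (e 0)) + ∑ j ∈ Finset.range k, w j • ((A ^ (k - 1 - j)) *ᵥ B) := by
        funext l; simp [Finset.sum_apply]
      have h2 : A *ᵥ ((A ^ k) *ᵥ (e 0)) = (A ^ (k + 1)) *ᵥ (e 0) := by
        rw [Matrix.mulVec_mulVec, ← pow_succ']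
      have h3 : A *ᵥ (∑ j ∈ Finset.range k, w j • ((A ^ (k - 1 - j)) *ᵥ B))
          = ∑ j ∈ Finset.range k, w j • ((A ^ (k - j)) *ᵥ B) := by
        rw [← Matrix.mulVecLin_apply, map_sum]
        refine Finset.sum_congr rfl fun j hj => ?_
        rw [_root_.map_smul, Matrix.mulVecLin_apply, Matrix.mulVec_mulVec, ← pow_succ']
        have hkj : k - 1 - j + 1 = k - j := by
          have := Finset.mem_range.mp hj; omega
        rw [hkj]
      have hsplit : (A *ᵥ (fun l => ((A ^ k) *ᵥ (e 0)) l +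
            ∑ j ∈ Finset.range k, w j * ((A ^ (k - 1 - j)) *ᵥ B) l)) i
          = ((A ^ (k + 1)) *ᵥ (e 0)) i +
            ∑ j ∈ Finset.range k, w j * ((A ^ (k - j)) *ᵥ B) i := by
        rw [h1, Matrix.mulVec_add, h2, h3]
        simp [Finset.sum_apply]
      calc e (k + 1) i ≤ A.mulVec (e k) i + B i * w k := hrec k i
        _ ≤ (A *ᵥ (fun l => ((A ^ k) *ᵥ (e 0)) l +
              ∑ j ∈ Finset.range k, w j * ((A ^ (k - 1 - j)) *ᵥ B) l)) i + B i * w k :=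
            add_le_add_left hmono _
        _ = ((A ^ (k + 1)) *ᵥ (e 0)) i +
            (∑ j ∈ Finset.range k, w j * ((A ^ (k - j)) *ᵥ B) i
              + w k * ((A ^ 0) *ᵥ B) i) := by
            rw [hsplit]; simp [Matrix.one_mulVec]; ring
        _ = ((A ^ (k + 1)) *ᵥ (e 0)) i +
            ∑ j ∈ Finset.range (k + 1), w j * ((A ^ (k - j)) *ᵥ B) i := by
            rw [Finset.sum_range_succ]; simp
        _ = ((A ^ (k + 1)) *ᵥ (e 0)) i +
            ∑ j ∈ Finset.range (k + 1), w j * ((A ^ (k + 1 - 1 - j)) *ᵥ B) i := by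
            congr 1
  set E : ℝ := ∑ l, e 0 l with hE
  set Bs : ℝ := ∑ l, B l with hBs
  have hE0 : 0 ≤ E := Finset.sum_nonneg fun l _ => he 0 l
  have hBs0 : 0 ≤ Bs := Finset.sum_nonneg fun l _ => hB l
  have hvb : ∀ (s : ℕ) (v : Fin N → ℝ), (∀ l, 0 ≤ v l) → ∀ i,
      ((A ^ s) *ᵥ v) i ≤ C * r ^ s * (∑ l, v l) := by
    intro s v hv i
    have : ((A ^ s) *ᵥ v) i = ∑ l, (A ^ s) i l * v l := rfl
    rw [this, Finset.mul_sum]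
    refine Finset.sum_le_sum fun l _ => ?_
    exact mul_le_mul_of_nonneg_right ((le_abs_self _).trans (hCr s i l)) (hv l)
  set s : ℕ → ℝ := fun k => ∑ j ∈ Finset.range k, r ^ (k - 1 - j) * w j with hs
  have hs0 : ∀ k, 0 ≤ s k := fun k =>
    Finset.sum_nonneg fun j _ => mul_nonneg (pow_nonneg hr0 _) (hw j)
  have hsrec : ∀ k, s (k + 1) = r * s k + w k := by
    intro k
    simp only [hs]
    rw [Finset.sum_range_succ, Finset.mul_sum]
    congr 1
    · refine Finset.sum_congr rfl fun j hj => ?_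
      have hj' := Finset.mem_range.mp hj
      rw [← mul_assoc, ← pow_succ']
      congr 2
      omega
    · simp
  have hstend : Tendsto s atTop (nhds 0) :=
    aux13_scalar r hr0 hr1 s w hs0 hw (fun k => (hsrec k).le) hw0
  have hbound : ∀ k i, e k i ≤ C * E * r ^ k + C * Bs * s k := by
    intro k i
    have h1 := hkey k i
    have h2 : ((A ^ k) *ᵥ (e 0)) i ≤ C * r ^ k * E := hvb k (e 0) (he 0) i
    have h3 : ∑ j ∈ Finset.range k, w j * ((A ^ (k - 1 - j)) *ᵥ B) i
        ≤ ∑ j ∈ Finset.range k, w j * (C * r ^ (k - 1 - j) * Bs) := by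
      refine Finset.sum_le_sum fun j hj => ?_
      exact mul_le_mul_of_nonneg_left (hvb (k - 1 - j) B hB i) (hw j)
    have h4 : ∑ j ∈ Finset.range k, w j * (C * r ^ (k - 1 - j) * Bs)
        = C * Bs * s k := by
      simp only [hs, Finset.mul_sum]
      refine Finset.sum_congr rfl fun j _ => ?_
      ring
    rw [h4] at h3
    nlinarith
  have hg : Tendsto (fun k => C * E * r ^ k + C * Bs * s k) atTop (nhds 0) := by
    have t1 : Tendsto (fun k : ℕ => C * E * r ^ k) atTop (nhds 0) := by
      simpa using (tendsto_pow_atTop_nhds_zero_of_lt_one hr0 hr1).const_mul (C * E)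
    have t2 : Tendsto (fun k => C * Bs * s k) atTop (nhds 0) := by
      simpa using hstend.const_mul (C * Bs)
    simpa using t1.add t2
  refine tendsto_pi_nhds.mpr fun i => ?_
  simpa using squeeze_zero (fun k => he k i) (fun k => hbound k i) hg

end LSTMmpc
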